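/- If G is a unipolar graph, then G contains no odd antihole as an induced subgraph; that is, G contains no induced subgraph isomorphic to the complement of a chordless cycle on an odd number (at least five) of vertices. -/

import Mathlib

/-- A clique split of a graph `G`: the vertex set is partitioned into a center clique `H`
and peripheral cliques `P 0, …, P (k-1)` with no edges between distinct peripheral cliques. -/
structure IsCliqueSplit {V : Type*} (G : SimpleGraph V) (H : Set V) {k : ℕ}
    (P : Fin k → Set V) : Prop where
  center_clique : G.IsClique H
  periph_clique : ∀ i, G.IsClique (P i)
  center_disj : ∀ i, Disjoint H (P i)
  periph_disj : ∀ i j, i ≠ j → Disjoint (P i) (P j)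
  covers : H ∪ (⋃ i, P i) = Set.univ
  no_cross : ∀ i j, i ≠ j → ∀ u ∈ P i, ∀ v ∈ P j, ¬ G.Adj u v

/-- A graph is unipolar if it admits a clique split. -/
def Unipolar {V : Type*} (G : SimpleGraph V) : Prop :=
  ∃ (H : Set V) (k : ℕ) (P : Fin k → Set V), IsCliqueSplit G H P

/-- If `G` is unipolar, then `G` contains no odd antihole (induced subgraph isomorphic
to the complement of a chordless cycle on an odd number, at least five, of vertices). -/
theorem unipolar_no_odd_antihole {V : Type*} (G : SimpleGraph V) (hG : Unipolar G)
    (n : ℕ) (hn : 5 ≤ n) (hodd : Odd n) :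
    IsEmpty ((SimpleGraph.cycleGraph n)ᶜ ↪g G) := by
  classical
  obtain ⟨H, k, P, hs⟩ := hG
  obtain ⟨m, rfl⟩ : ∃ m, n = m + 5 := ⟨n - 5, by omega⟩
  constructor
  intro f
  letI : CommRing (Fin (m+5)) := Fin.instCommRing (m+5)
  -- numerals in `Fin (m+5)`
  have hcast : ∀ a : ℕ, a < m + 5 → ((a : Fin (m+5))).val = a := fun a ha =>
    Fin.val_cast_of_lt ha
  have hinj : ∀ a b : ℕ, a < m + 5 → b < m + 5 → (a : Fin (m+5)) = (b : Fin (m+5)) → a = b := by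
    intro a b ha hb h
    have := congrArg Fin.val h
    rw [hcast a ha, hcast b hb] at this
    exact this
  have hkey : ∀ a : ℕ, 2 ≤ a → a < m + 4 →
      (a : Fin (m+5)) ≠ 0 ∧ (a : Fin (m+5)) ≠ 1 ∧ (a : Fin (m+5)) ≠ -1 := by
    intro a h2 h4
    refine ⟨?_, ?_, ?_⟩
    · intro h
      have := hinj a 0 (by omega) (by omega) (by push_cast; exact h)
      omega
    · intro h
      have := hinj a 1 (by omega) (by omega) (by push_cast; exact h)
      omega
    · intro h
      have h' : ((a + 1 : ℕ) : Fin (m+5)) = ((0 : ℕ) : Fin (m+5)) := by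
        push_cast; rw [h]; ring
      have := hinj (a+1) 0 (by omega) (by omega) h'
      omega
  -- the coloring
  let c : Fin (m+5) → Option (Fin k) := fun i =>
    if h : ∃ j, f i ∈ P j then some h.choose else none
  have hc_some : ∀ i j, c i = some j → f i ∈ P j := by
    intro i j hij
    simp only [c] at hij
    split at hij
    · rename_i h; cases hij; exact h.choose_spec
    · cases hij
  have hc_none : ∀ i, c i = none → f i ∈ H := by
    intro i hi
    simp only [c] at hi
    split at hi
    · cases hi
    · rename_i h
      have hv : f i ∈ H ∪ ⋃ j, P j := by rw [hs.covers]; trivial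
      rcases hv with hv | hv
      · exact hv
      · exact absurd (by simpa using hv) h
  -- adjacency in the cycle graph
  have adj_iff : ∀ u v : Fin (m+5),
      (SimpleGraph.cycleGraph (m+5)).Adj u v ↔ u - v = 1 ∨ v - u = 1 := fun u v =>
    SimpleGraph.cycleGraph_adj (n := m + 3)
  -- consecutive vertices get different colors
  have hA : ∀ i : Fin (m+5), c i ≠ c (i + 1) := by
    intro i hEq
    have hne : i ≠ i + 1 := by
      intro h
      have h1 : (1 : Fin (m+5)) = 0 := by
        have := congrArg (· - i) h
        simpa using this.symm
      have := hinj 1 0 (by omega) (by omega) (by push_cast; exact h1)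
      omega
    have hfne : f i ≠ f (i+1) := fun h => hne (f.injective h)
    have hnadj : ¬ G.Adj (f i) (f (i+1)) := by
      intro hadj
      have h2 := f.map_adj_iff.mp hadj
      rw [SimpleGraph.compl_adj] at h2
      exact h2.2 ((adj_iff _ _).mpr (Or.inr (by ring)))
    cases hcase : c i with
    | none =>
      have h1 := hc_none i hcase
      have h2 := hc_none (i+1) (hEq.symm.trans hcase)
      exact hnadj (hs.center_clique h1 h2 hfne)
    | some a =>
      have h1 := hc_some i a hcase
      have h2 := hc_some (i+1) a (hEq.symm.trans hcase)
      exact hnadj (hs.periph_clique a h1 h2 hfne)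
  -- nonconsecutive vertices with `some` colors have equal colors
  have hB : ∀ (i d : Fin (m+5)), d ≠ 0 → d ≠ 1 → d ≠ -1 →
      ∀ a b, c i = some a → c (i + d) = some b → a = b := by
    intro i d hd0 hd1 hdneg a b ha hb
    by_contra hab
    have hne : i ≠ i + d := by
      intro h
      apply hd0
      have := congrArg (· - i) h
      simpa using this.symm
    have hnadj : ¬ (SimpleGraph.cycleGraph (m+5)).Adj i (i + d) := by
      rw [adj_iff]
      push_neg
      constructor
      · intro h
        apply hdneg
        have : -d = 1 := by rw [← h]; ring
        linear_combination -this
      · intro h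
        apply hd1
        rw [← h]; ring
    have hadj : G.Adj (f i) (f (i + d)) := by
      rw [f.map_adj_iff, SimpleGraph.compl_adj]
      exact ⟨hne, hnadj⟩
    exact hs.no_cross a b hab (f i) (hc_some i a ha) (f (i+d)) (hc_some _ b hb) hadj
  -- there exist consecutive vertices, both with `some` colors
  have hEx : ∃ (i : Fin (m+5)) (a b : Fin k), c i = some a ∧ c (i+1) = some b := by
    by_contra hcon
    push_neg at hcon
    have hstep : ∀ i : Fin (m+5), (c (i+1)).isNone = !(c i).isNone := by
      intro i
      cases h1 : c i with
      | none =>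
        cases h2 : c (i+1) with
        | none => exact absurd (h1.trans h2.symm) (hA i)
        | some b => simp
      | some a =>
        cases h2 : c (i+1) with
        | none => simp
        | some b => exact absurd (hcon i a b h1 h2) not_false
    set d : ℕ → Bool := fun t => (c (t : Fin (m+5))).isNone with hd
    have hstep' : ∀ t : ℕ, d (t+1) = !d t := by
      intro t
      have : ((t+1 : ℕ) : Fin (m+5)) = ((t : ℕ) : Fin (m+5)) + 1 := by push_cast; ring
      simp only [hd, this]
      exact hstep _
    have heven : ∀ t : ℕ, d (2*t) = d 0 := by
      intro t
      induction t with
      | zero => rfl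
      | succ t ih =>
        have h1 : 2*(t+1) = (2*t+1)+1 := by ring
        rw [h1, hstep', hstep', ih, Bool.not_not]
    obtain ⟨t, ht⟩ := hodd
    have h1 : d (m+5) = !d 0 := by rw [ht, hstep', heven]
    have h2 : d (m+5) = d 0 := by
      have : ((m+5 : ℕ) : Fin (m+5)) = ((0 : ℕ) : Fin (m+5)) := by
        simp [Fin.natCast_self]
      simp only [hd, this]
    rw [h2] at h1
    simp at h1
  obtain ⟨i, a, b, ha, hb⟩ := hEx
  have hab : a ≠ b := fun h => hA i (by rw [ha, hb, h])
  -- c (i+3) = none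
  have h3' := hkey 3 (by omega) (by omega)
  have h2' := hkey 2 (by omega) (by omega)
  have h3none : c (i + 3) = none := by
    cases hx : c (i + 3) with
    | none => rfl
    | some x =>
      have e1 : a = x := hB i 3 h3'.1 h3'.2.1 h3'.2.2 a x ha hx
      have e2 : b = x := by
        refine hB (i+1) 2 h2'.1 h2'.2.1 h2'.2.2 b x hb ?_
        have : i + 1 + 2 = i + 3 := by ring
        rw [this]; exact hx
      exact (hab (e1.trans e2.symm)).elim
  by_cases hm : m = 0
  · -- n = 5
    subst hm
    -- c (i+2) = some y with y = a
    have h2a : ∀ x, c (i+2) = some x → a = x := fun x hx =>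
      hB i 2 h2'.1 h2'.2.1 h2'.2.2 a x ha hx
    have h4b : ∀ x, c (i+4) = some x → b = x := by
      intro x hx
      refine hB (i+1) 3 h3'.1 h3'.2.1 h3'.2.2 b x hb ?_
      have : i + 1 + 3 = i + 4 := by ring
      rw [this]; exact hx
    have hy : ∃ y, c (i+2) = some y := by
      cases hx : c (i+2) with
      | none =>
        exfalso
        apply hA (i+2)
        have : i + 2 + 1 = i + 3 := by ring
        rw [hx, this, h3none]
      | some y => exact ⟨y, rfl⟩
    have hz : ∃ z, c (i+4) = some z := by
      cases hx : c (i+4) with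
      | none =>
        exfalso
        apply hA (i+3)
        have : i + 3 + 1 = i + 4 := by ring
        rw [h3none, this, hx]
      | some z => exact ⟨z, rfl⟩
    obtain ⟨y, hy⟩ := hy
    obtain ⟨z, hz⟩ := hz
    have e1 : a = y := h2a y hy
    have e2 : b = z := h4b z hz
    have e3 : y = z := by
      refine hB (i+2) 2 h2'.1 h2'.2.1 h2'.2.2 y z hy ?_
      have : i + 2 + 2 = i + 4 := by ring
      rw [this]; exact hz
    exact hab (by rw [e1, e3, ← e2])
  · -- n ≥ 6
    have h4' := hkey 4 (by omega) (by omega)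
    have h4none : c (i + 4) = none := by
      cases hx : c (i + 4) with
      | none => rfl
      | some x =>
        have e1 : a = x := hB i 4 h4'.1 h4'.2.1 h4'.2.2 a x ha hx
        have e2 : b = x := by
          refine hB (i+1) 3 h3'.1 h3'.2.1 h3'.2.2 b x hb ?_
          have : i + 1 + 3 = i + 4 := by ring
          rw [this]; exact hx
        exact (hab (e1.trans e2.symm)).elim
    apply hA (i+3)
    have : i + 3 + 1 = i + 4 := by ring
    rw [h3none, this, h4none]
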